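/- Assume p_min > p_tail and let T > 0 and q > 0 satisfy p_min·exp(−q²/2) ≥ p_tail + (p_min − p_tail)/2. If θ ∈ ℝ satisfies |θ − λ_m| ≤ q/T for some m ∈ D, then for every e ∈ ℂ with |e| ≤ (p_min − p_tail)/8 one has |Σ_{m′=1}^M p_{m′} exp(−T²(λ_{m′} − θ)²/2) + e| ≥ p_tail + 3(p_min − p_tail)/8. -/

import Mathlib

open Real Set

theorem filter_lower_bound_near_dominant
    (M : ℕ) (lam p : Fin M → ℝ) (D : Finset (Fin M)) (hD : D.Nonempty)
    (hp : ∀ m, 0 ≤ p m) (hsum : ∑ m, p m = 1)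
    (pmin ptail : ℝ) (hpmin : pmin = D.inf' hD p) (hptail : ptail = ∑ m ∈ Dᶜ, p m)
    (hdom : ptail < pmin)
    (T q : ℝ) (hT : 0 < T) (hq : 0 < q)
    (hfil : ptail + (pmin - ptail) / 2 ≤ pmin * Real.exp (-q ^ 2 / 2))
    (θ : ℝ) (m : Fin M) (hm : m ∈ D) (hθ : |θ - lam m| ≤ q / T)
    (e : ℂ) (he : ‖e‖ ≤ (pmin - ptail) / 8) :
    ptail + 3 * (pmin - ptail) / 8 ≤
      ‖(∑ m' : Fin M, (p m' : ℂ) * Real.exp (-(T ^ 2 * (lam m' - θ) ^ 2) / 2)) + e‖ := by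
  set S : ℝ := ∑ m' : Fin M, p m' * Real.exp (-(T ^ 2 * (lam m' - θ) ^ 2) / 2) with hS
  have hcast : (∑ m' : Fin M, (p m' : ℂ) * Real.exp (-(T ^ 2 * (lam m' - θ) ^ 2) / 2))
      = (S : ℂ) := by
    rw [hS]; push_cast; ring
  rw [hcast]
  -- S is at least pmin * exp(-q^2/2)
  have hpminle : pmin ≤ p m := hpmin ▸ Finset.inf'_le p hm
  have hsq : T ^ 2 * (lam m - θ) ^ 2 ≤ q ^ 2 := by
    have h1 : |θ - lam m| * T ≤ q := by
      rw [← le_div_iff₀ hT]; exact hθ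
    calc T ^ 2 * (lam m - θ) ^ 2 = (|θ - lam m| * T) ^ 2 := by
          rw [mul_pow, sq_abs]; ring
      _ ≤ q ^ 2 := pow_le_pow_left₀ (by positivity) h1 2
  have hexp : Real.exp (-q ^ 2 / 2) ≤ Real.exp (-(T ^ 2 * (lam m - θ) ^ 2) / 2) := by
    apply Real.exp_le_exp.mpr; linarith
  have hterm : pmin * Real.exp (-q ^ 2 / 2) ≤ p m * Real.exp (-(T ^ 2 * (lam m - θ) ^ 2) / 2) := by
    exact mul_le_mul hpminle hexp (Real.exp_pos _).le (hp m)
  have hSlb : pmin * Real.exp (-q ^ 2 / 2) ≤ S := by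
    refine le_trans hterm ?_
    rw [hS]
    exact Finset.single_le_sum
      (f := fun i => p i * Real.exp (-(T ^ 2 * (lam i - θ) ^ 2) / 2))
      (fun i _ => mul_nonneg (hp i) (Real.exp_pos _).le) (Finset.mem_univ m)
  have hre : S - ‖e‖ ≤ ‖(S : ℂ) + e‖ := by
    have h1 : ((S : ℂ) + e).re ≤ ‖(S : ℂ) + e‖ := Complex.re_le_norm _
    have h2 : ((S : ℂ) + e).re = S + e.re := by simp
    rw [h2] at h1
    have h4 : |e.re| ≤ ‖e‖ := Complex.abs_re_le_norm e
    have h5 := neg_abs_le e.re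
    linarith
  linarith
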